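/- Let f : (0,1] → ℝ, f(x) = sin(1/x) + 2, and let F := ({0} × [1,3]) ∪ graph(f) ⊂ ℝ^2, where graph(f) = {(x, f(x)) : x ∈ (0,1]}. Then F is compact, F does not meet the x-axis, the visible part of F from the x-axis (i.e. V_{θ,0}(F) with θ = (0,1), so that L_{θ,0} is the x-axis) equals {(0,1)} ∪ graph(f), and the closure of this visible part equals F. -/

import Mathlib

open Metric Set
open scoped RealInnerProductSpace ENNReal

/-- Orthogonal projection onto the affine hyperplane through `y` orthogonal to the
unit vector `θ` (for `y = 0` this is the projection onto the hyperplane `L_θ`). -/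
noncomputable def projH {d : ℕ} (θ y z : EuclideanSpace ℝ (Fin d)) : EuclideanSpace ℝ (Fin d) :=
  z - ⟪z - y, θ⟫ • θ

/-- The affine hyperplane `L_{θ,y}` through `y` orthogonal to `θ`. -/
def affHyp {d : ℕ} (θ y : EuclideanSpace ℝ (Fin d)) : Set (EuclideanSpace ℝ (Fin d)) :=
  {x | ⟪x - y, θ⟫ = 0}

/-- The visible part of `F` from the hyperplane `L_{θ,y}`:
points `z ∈ F` such that the segment from `z` to its projection meets `F` only in `z`. -/
noncomputable def visible {d : ℕ} (θ y : EuclideanSpace ℝ (Fin d))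
    (F : Set (EuclideanSpace ℝ (Fin d))) : Set (EuclideanSpace ℝ (Fin d)) :=
  {z | z ∈ F ∧ segment ℝ z (projH θ y z) ∩ F = {z}}

/-- Interior of `A` relative to the hyperplane `L_θ` through the origin orthogonal to `θ`. -/
def relIntH {d : ℕ} (θ : EuclideanSpace ℝ (Fin d)) (A : Set (EuclideanSpace ℝ (Fin d))) :
    Set (EuclideanSpace ℝ (Fin d)) :=
  {x | x ∈ A ∧ ∃ ε > 0, ∀ z : EuclideanSpace ℝ (Fin d), ⟪z, θ⟫ = 0 → dist z x < ε → z ∈ A}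

/-- The penetrable part of `F` in direction `θ`:
`Pen_θ(F) = F ∩ P_θ⁻¹(P_θ(F) \ Int(P_θ(F)))`. -/
noncomputable def pen {d : ℕ} (θ : EuclideanSpace ℝ (Fin d))
    (F : Set (EuclideanSpace ℝ (Fin d))) : Set (EuclideanSpace ℝ (Fin d)) :=
  F ∩ projH θ 0 ⁻¹' (projH θ 0 '' F \ relIntH θ (projH θ 0 '' F))

/-- The Assouad dimension of a set: the infimum of all `s ≥ 0` such that for some `C > 0`,
for all `0 < r < R` and `x ∈ F`, the set `F ∩ B(x,R)` can be covered by at most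
`C (R/r)^s` balls of radius `r`. -/
noncomputable def dimA {d : ℕ} (F : Set (EuclideanSpace ℝ (Fin d))) : ℝ≥0∞ :=
  ⨅ (s : ℝ) (_ : 0 ≤ s) (_ : ∃ C : ℝ, 0 < C ∧ ∀ x ∈ F, ∀ r R : ℝ, 0 < r → r < R →
      ∃ t : Finset (EuclideanSpace ℝ (Fin d)),
        (t.card : ℝ) ≤ C * (R / r) ^ s ∧ F ∩ ball x R ⊆ ⋃ c ∈ t, ball c r),
    ENNReal.ofReal s

/-- Least number of balls of radius `r` needed to cover `F`. -/
noncomputable def coverN {d : ℕ} (F : Set (EuclideanSpace ℝ (Fin d))) (r : ℝ) : ℕ :=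
  sInf {n : ℕ | ∃ t : Finset (EuclideanSpace ℝ (Fin d)), t.card = n ∧ F ⊆ ⋃ c ∈ t, ball c r}

/-- The upper box-counting dimension of a set. -/
noncomputable def udimB {d : ℕ} (F : Set (EuclideanSpace ℝ (Fin d))) : ℝ≥0∞ :=
  Filter.limsup (fun r : ℝ => ENNReal.ofReal (Real.log (coverN F r) / Real.log (1 / r)))
    (nhdsWithin 0 (Set.Ioi 0))

/-- The point of the plane `ℝ² = EuclideanSpace ℝ (Fin 2)` with coordinates `(a, b)`. -/
noncomputable def e2 (a b : ℝ) : EuclideanSpace ℝ (Fin 2) :=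
  (EuclideanSpace.equiv (Fin 2) ℝ).symm ![a, b]


section Aux

private lemma e2_eta (z : EuclideanSpace ℝ (Fin 2)) : e2 (z 0) (z 1) = z := by
  ext i; fin_cases i <;> rfl

private lemma inner_e (z : EuclideanSpace ℝ (Fin 2)) : ⟪z, e2 0 1⟫ = z 1 := by
  simp [PiLp.inner_apply, Fin.sum_univ_two, e2, RCLike.inner_apply]

private lemma seg_coord {z p w : EuclideanSpace ℝ (Fin 2)} (i : Fin 2)
    (h : w ∈ segment ℝ z p) : w i ∈ segment ℝ (z i) (p i) := by
  obtain ⟨a, b, ha, hb, hab, rfl⟩ := h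
  exact ⟨a, b, ha, hb, hab, by simp [PiLp.add_apply, PiLp.smul_apply, smul_eq_mul]⟩

private lemma projH_eq (z : EuclideanSpace ℝ (Fin 2)) : projH (e2 0 1) 0 z = e2 (z 0) 0 := by
  unfold projH
  rw [sub_zero, inner_e]
  ext i
  fin_cases i <;>
    simp [e2, PiLp.sub_apply, PiLp.smul_apply, smul_eq_mul]

private lemma e2_lin (a b : ℝ) : e2 a b = a • e2 1 0 + b • e2 0 1 := by
  ext i; fin_cases i <;>
    simp [e2, PiLp.add_apply, PiLp.smul_apply, smul_eq_mul]

private lemma cont_e2 (c : ℝ) : Continuous (fun a : ℝ => e2 a c) := by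
  have h : (fun a : ℝ => e2 a c) = fun a : ℝ => a • e2 1 0 + c • e2 0 1 :=
    funext fun a => e2_lin a c
  rw [h]
  exact (continuous_id.smul continuous_const).add continuous_const

private lemma sin_bdd (x : ℝ) : Real.sin (1 / x) + 2 ∈ Set.Icc (1:ℝ) 3 := by
  constructor
  · have := Real.neg_one_le_sin (1/x); linarith
  · have := Real.sin_le_one (1/x); linarith

private lemma closure_G :
    closure {z : EuclideanSpace ℝ (Fin 2) | z 0 ∈ Set.Ioc (0:ℝ) 1 ∧ z 1 = Real.sin (1 / z 0) + 2}
    = {z : EuclideanSpace ℝ (Fin 2) | z 0 = 0 ∧ z 1 ∈ Set.Icc (1:ℝ) 3} ∪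
      {z | z 0 ∈ Set.Ioc (0:ℝ) 1 ∧ z 1 = Real.sin (1 / z 0) + 2} := by
  set G : Set (EuclideanSpace ℝ (Fin 2)) :=
    {z | z 0 ∈ Set.Ioc (0:ℝ) 1 ∧ z 1 = Real.sin (1 / z 0) + 2} with hG
  apply Set.Subset.antisymm
  · intro z hz
    obtain ⟨u, hu, hlim⟩ := mem_closure_iff_seq_limit.1 hz
    have h0 : Filter.Tendsto (fun n => u n 0) Filter.atTop (nhds (z 0)) :=
      ((EuclideanSpace.proj (0 : Fin 2) :
        EuclideanSpace ℝ (Fin 2) →L[ℝ] ℝ).continuous.tendsto z).comp hlim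
    have h1 : Filter.Tendsto (fun n => u n 1) Filter.atTop (nhds (z 1)) :=
      ((EuclideanSpace.proj (1 : Fin 2) :
        EuclideanSpace ℝ (Fin 2) →L[ℝ] ℝ).continuous.tendsto z).comp hlim
    have hz0nn : 0 ≤ z 0 := ge_of_tendsto' h0 (fun n => (hu n).1.1.le)
    have hz0le : z 0 ≤ 1 := le_of_tendsto' h0 (fun n => (hu n).1.2)
    rcases eq_or_lt_of_le hz0nn with heq | hpos
    · left
      refine ⟨heq.symm, ?_, ?_⟩
      · refine ge_of_tendsto' h1 (fun n => ?_)
        rw [(hu n).2]; exact (sin_bdd (u n 0)).1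
      · refine le_of_tendsto' h1 (fun n => ?_)
        rw [(hu n).2]; exact (sin_bdd (u n 0)).2
    · right
      refine ⟨⟨hpos, hz0le⟩, ?_⟩
      have hc : ContinuousAt (fun x : ℝ => Real.sin (1 / x) + 2) (z 0) := by
        have hdiv : ContinuousAt (fun x : ℝ => 1 / x) (z 0) :=
          ContinuousAt.div continuousAt_const continuousAt_id hpos.ne'
        exact (Real.continuous_sin.continuousAt.comp hdiv).add continuousAt_const
      have h2 : Filter.Tendsto (fun n => Real.sin (1 / u n 0) + 2) Filter.atTop
          (nhds (Real.sin (1 / z 0) + 2)) := hc.tendsto.comp h0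
      have h3 : Filter.Tendsto (fun n => u n 1) Filter.atTop
          (nhds (Real.sin (1 / z 0) + 2)) := by
        refine h2.congr (fun n => ?_)
        exact ((hu n).2).symm
      exact tendsto_nhds_unique h1 h3
  · rintro z (⟨hz0, hz1⟩ | hzG)
    · set t := Real.arcsin (z 1 - 2) with ht
      have hsin : Real.sin t = z 1 - 2 :=
        Real.sin_arcsin (by linarith [hz1.1]) (by linarith [hz1.2])
      have htlb : -(Real.pi / 2) ≤ t := Real.neg_pi_div_two_le_arcsin _
      set s : ℕ → ℝ := fun n => t + (n + 1 : ℕ) * (2 * Real.pi) with hs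
      have hpi := Real.pi_gt_three
      have hs1 : ∀ n, 1 ≤ s n := by
        intro n
        have hn : (0:ℝ) ≤ (n:ℝ) := Nat.cast_nonneg n
        simp only [hs, Nat.cast_add, Nat.cast_one]
        nlinarith
      have hmem : ∀ n, e2 (1 / s n) (z 1) ∈ G := by
        intro n
        have hsn : (0:ℝ) < s n := lt_of_lt_of_le one_pos (hs1 n)
        refine ⟨⟨?_, ?_⟩, ?_⟩
        · show (0:ℝ) < 1 / s n
          positivity
        · show (1:ℝ) / s n ≤ 1
          rw [div_le_one hsn]; exact hs1 n
        · show z 1 = Real.sin (1 / (1 / s n)) + 2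
          rw [one_div_one_div, hs]
          rw [Real.sin_add_nat_mul_two_pi, hsin]
          ring
      have hstop : Filter.Tendsto s Filter.atTop Filter.atTop := by
        have hc1 : Filter.Tendsto (fun n : ℕ => ((n + 1 : ℕ) : ℝ)) Filter.atTop Filter.atTop :=
          tendsto_natCast_atTop_atTop.comp (Filter.tendsto_add_atTop_nat 1)
        exact Filter.tendsto_atTop_add_const_left _ t
          (hc1.atTop_mul_const (by positivity : (0:ℝ) < 2 * Real.pi))
      have hinv : Filter.Tendsto (fun n => 1 / s n) Filter.atTop (nhds 0) := by
        rw [show (fun n => 1 / s n) = s⁻¹ from funext fun n => one_div (s n)]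
        exact hstop.inv_tendsto_atTop
      have hten : Filter.Tendsto (fun n => e2 (1 / s n) (z 1)) Filter.atTop
          (nhds (e2 0 (z 1))) := ((cont_e2 (z 1)).tendsto 0).comp hinv
      have hze : e2 0 (z 1) = z := by rw [← hz0]; exact e2_eta z
      rw [← hze]
      exact mem_closure_of_tendsto hten (Filter.Eventually.of_forall hmem)
    · exact subset_closure hzG

private lemma G_bounded : Bornology.IsBounded
    {z : EuclideanSpace ℝ (Fin 2) | z 0 ∈ Set.Ioc (0:ℝ) 1 ∧ z 1 = Real.sin (1 / z 0) + 2} := by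
  refine (Metric.isBounded_closedBall (x := (0 : EuclideanSpace ℝ (Fin 2))) (r := 4)).subset ?_
  rintro z ⟨hz0, hz1⟩
  rw [Metric.mem_closedBall, dist_zero_right, EuclideanSpace.norm_eq]
  have hb1 : -1 ≤ Real.sin (1 / z 0) := Real.neg_one_le_sin _
  have hb2 : Real.sin (1 / z 0) ≤ 1 := Real.sin_le_one _
  have h16 : ∑ i, ‖z i‖ ^ 2 ≤ 16 := by
    rw [Fin.sum_univ_two]
    have h0 : ‖z 0‖ ^ 2 ≤ 1 := by
      rw [Real.norm_eq_abs, sq_abs]; nlinarith [hz0.1, hz0.2]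
    have h1 : ‖z 1‖ ^ 2 ≤ 9 := by
      rw [Real.norm_eq_abs, sq_abs, hz1]; nlinarith
    linarith
  calc Real.sqrt (∑ i, ‖z i‖ ^ 2) ≤ Real.sqrt 16 := Real.sqrt_le_sqrt h16
    _ = 4 := by rw [show (16:ℝ) = 4 ^ 2 by norm_num, Real.sqrt_sq (by norm_num)]

end Aux

/-- For `F = ({0} × [1,3]) ∪ graph(x ↦ sin(1/x) + 2)`, the set `F` is compact and does
not meet the `x`-axis, the visible part of `F` from the `x`-axis equals
`{(0,1)} ∪ graph(f)`, and the closure of this visible part equals `F`. -/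
theorem stmt18 (F : Set (EuclideanSpace ℝ (Fin 2)))
    (hF : F = {z | z 0 = 0 ∧ z 1 ∈ Set.Icc (1:ℝ) 3} ∪
      {z | z 0 ∈ Set.Ioc (0:ℝ) 1 ∧ z 1 = Real.sin (1 / z 0) + 2})
    (θ : EuclideanSpace ℝ (Fin 2)) (hθ : θ = e2 0 1) :
    IsCompact F ∧
    affHyp θ 0 ∩ F = ∅ ∧
    visible θ 0 F =
      insert (e2 0 1) {z | z 0 ∈ Set.Ioc (0:ℝ) 1 ∧ z 1 = Real.sin (1 / z 0) + 2} ∧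
    closure (visible θ 0 F) = F := by
  subst hF hθ
  set G : Set (EuclideanSpace ℝ (Fin 2)) :=
    {z | z 0 ∈ Set.Ioc (0:ℝ) 1 ∧ z 1 = Real.sin (1 / z 0) + 2} with hGdef
  set S : Set (EuclideanSpace ℝ (Fin 2)) :=
    {z | z 0 = 0 ∧ z 1 ∈ Set.Icc (1:ℝ) 3} with hSdef
  have hclG : closure G = S ∪ G := closure_G
  have hcpt : IsCompact (S ∪ G) := by
    rw [← hclG]
    exact G_bounded.isCompact_closure
  have hvis : visible (e2 0 1) 0 (S ∪ G) = insert (e2 0 1) G := by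
    ext z
    constructor
    · rintro ⟨hzF, hseg⟩
      rcases hzF with ⟨hz0, hz1⟩ | hG
      · have hz1pos : (0:ℝ) < z 1 := lt_of_lt_of_le one_pos hz1.1
        have h1 : e2 0 1 ∈ segment ℝ z (projH (e2 0 1) 0 z) ∩ (S ∪ G) := by
          constructor
          · rw [projH_eq]
            refine ⟨1 / z 1, 1 - 1 / z 1, by positivity, ?_, by ring, ?_⟩
            · have : 1 / z 1 ≤ 1 := by rw [div_le_one hz1pos]; exact hz1.1
              linarith
            · ext i
              fin_cases i <;>
                simp [e2, PiLp.add_apply, PiLp.smul_apply, smul_eq_mul, hz0] <;>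
                field_simp
          · exact Or.inl ⟨rfl, by norm_num [e2]⟩
        rw [hseg] at h1
        exact Or.inl (Set.mem_singleton_iff.1 h1).symm
      · exact Or.inr hG
    · intro hz
      rcases hz with rfl | hG
      · refine ⟨Or.inl ⟨rfl, by norm_num [e2]⟩, ?_⟩
        rw [Set.eq_singleton_iff_unique_mem]
        refine ⟨⟨left_mem_segment ℝ _ _, Or.inl ⟨rfl, by norm_num [e2]⟩⟩, ?_⟩
        rintro w ⟨hwseg, hwF⟩
        rw [projH_eq] at hwseg
        have hw0 : w 0 ∈ segment ℝ ((e2 0 1) 0) ((e2 ((e2 0 1) 0) 0) 0) := seg_coord 0 hwseg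
        have hw1 : w 1 ∈ segment ℝ ((e2 0 1) 1) ((e2 ((e2 0 1) 0) 0) 1) := seg_coord 1 hwseg
        have hw0' : w 0 = 0 := by
          have h : w 0 ∈ segment ℝ (0:ℝ) 0 := hw0
          rwa [segment_same, Set.mem_singleton_iff] at h
        have hw1' : w 1 ∈ Set.Icc (0:ℝ) 1 := by
          have h : w 1 ∈ segment ℝ (1:ℝ) 0 := hw1
          rwa [segment_symm, segment_eq_Icc zero_le_one] at h
        rcases hwF with ⟨_, hw13⟩ | ⟨hwIoc, _⟩
        · have h : w 1 = 1 := le_antisymm hw1'.2 hw13.1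
          rw [← e2_eta w, hw0', h]
        · exact absurd hw0' hwIoc.1.ne'
      · refine ⟨Or.inr hG, ?_⟩
        rw [Set.eq_singleton_iff_unique_mem]
        refine ⟨⟨left_mem_segment ℝ _ _, Or.inr hG⟩, ?_⟩
        rintro w ⟨hwseg, hwF⟩
        rw [projH_eq] at hwseg
        have hw0 : w 0 ∈ segment ℝ (z 0) ((e2 (z 0) 0) 0) := seg_coord 0 hwseg
        have hw0' : w 0 = z 0 := by
          have h : w 0 ∈ segment ℝ (z 0) (z 0) := hw0
          rwa [segment_same, Set.mem_singleton_iff] at h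
        rcases hwF with ⟨hw0z, _⟩ | ⟨_, hw1eq⟩
        · exact absurd (hw0' ▸ hw0z) hG.1.1.ne'
        · rw [← e2_eta w, hw0', hw1eq, hw0', ← hG.2, e2_eta]
  refine ⟨hcpt, ?_, hvis, ?_⟩
  · rw [Set.eq_empty_iff_forall_notMem]
    rintro z ⟨hzH, hzF⟩
    have hz1 : z 1 = 0 := by
      have h : ⟪z - 0, e2 0 1⟫ = 0 := hzH
      rwa [sub_zero, inner_e] at h
    rcases hzF with ⟨_, hz13⟩ | ⟨_, hzeq⟩
    · rw [hz1] at hz13; exact absurd hz13.1 (by norm_num)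
    · have := (sin_bdd (z 0)).1
      rw [← hzeq, hz1] at this
      norm_num at this
  · rw [hvis, Set.insert_eq, closure_union, closure_singleton, hclG]
    have h01 : e2 0 1 ∈ S := ⟨rfl, by norm_num [e2]⟩
    exact Set.union_eq_self_of_subset_left (Set.singleton_subset_iff.2 (Or.inl h01))
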